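/- Let d ≥ 2 and let f_d be the generating function of boundary guillotine partitions given by the nested formula f = 1 + (dx(1−x)/(1−x)²)(1 + ((d−1)x(1−x)/(1−2x)²)(⋯(1 + (x(1−x)/(1−dx)²))²⋯)²)². Then [x^n] f_d ∼ ((d−1)/d)^(2^d − 1) · n^(2^d − 1)/(2^d − 1)! · d^n as n → ∞. -/

import Mathlib

open PowerSeries

/-- `boundaryAux d k` is the series `g_{d−k}` in the nested formula for the
generating function of boundary guillotine partitions of a d-box:
`g_d = 1/(1−dx)` and `g_i = (1/(1−ix))·(1 + (d−i)x(1−x)·g_{i+1}²)`. -/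
noncomputable def boundaryAux (d : ℕ) : ℕ → PowerSeries ℝ
  | 0 => (1 - (d : PowerSeries ℝ) * X)⁻¹
  | k + 1 => (1 - ((d - (k + 1) : ℕ) : PowerSeries ℝ) * X)⁻¹ *
      (1 + ((k + 1 : ℕ) : PowerSeries ℝ) * X * (1 - X) * (boundaryAux d k) ^ 2)

/-- The generating function `f_d = 1 + d·x(1−x)·g_1²` of boundary guillotine
partitions of a d-box. -/
noncomputable def boundaryGF (d : ℕ) : PowerSeries ℝ :=
  1 + (d : PowerSeries ℝ) * X * (1 - X) * (boundaryAux d (d - 1)) ^ 2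

open Filter Finset

noncomputable section

namespace BGaux

lemma one_sub_mul_geom (a : ℝ) : (1 - C a * X) * PowerSeries.mk (fun n => a ^ n) = 1 := by
  ext n
  cases n with
  | zero => simp
  | succ n =>
    rw [sub_mul, one_mul, map_sub, mul_assoc, coeff_C_mul, coeff_succ_X_mul]
    simp [pow_succ, coeff_one, mul_comm]

lemma constCoeff_one_sub (a : ℝ) : constantCoeff (1 - C a * X) ≠ 0 := by simp

lemma inv_one_sub (a : ℝ) : (1 - C a * X)⁻¹ = mk fun n => a ^ n := by
  rw [PowerSeries.inv_eq_iff_mul_eq_one (constCoeff_one_sub a), mul_comm]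
  exact one_sub_mul_geom a

lemma coeff_inv_one_sub (a : ℝ) (n : ℕ) : coeff n (1 - C a * X)⁻¹ = a ^ n := by
  rw [inv_one_sub]; simp

lemma unit_inv_cancel (a : ℝ) : (1 - C a * X) * (1 - C a * X)⁻¹ = 1 :=
  PowerSeries.mul_inv_cancel _ (constCoeff_one_sub a)

lemma coeff_inv_pow (a : ℝ) (m n : ℕ) :
    coeff n ((1 - C a * X)⁻¹ ^ (m + 1)) = ((n + m).choose m : ℝ) * a ^ n := by
  induction m generalizing n with
  | zero => simp [coeff_inv_one_sub]
  | succ m ih =>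
    rw [pow_succ, coeff_mul, Finset.Nat.sum_antidiagonal_eq_sum_range_succ_mk]
    have : ∀ k ∈ range (n + 1),
        coeff k ((1 - C a * X)⁻¹ ^ (m + 1)) * coeff (n - k) (1 - C a * X)⁻¹
        = ((k + m).choose m : ℝ) * a ^ n := by
      intro k hk
      rw [mem_range] at hk
      rw [ih, coeff_inv_one_sub, mul_assoc, ← pow_add,
        Nat.add_sub_cancel' (by omega : k ≤ n)]
    rw [Finset.sum_congr rfl this, ← Finset.sum_mul, ← Nat.cast_sum,
      Nat.sum_range_add_choose n m]
    norm_cast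

lemma partial_frac (a b : ℝ) (hab : a ≠ b) :
    (1 - C a * X)⁻¹ * (1 - C b * X)⁻¹
      = C (b / (b - a)) * (1 - C b * X)⁻¹ + C (a / (a - b)) * (1 - C a * X)⁻¹ := by
  rw [← PowerSeries.mul_inv_rev]
  rw [PowerSeries.inv_eq_iff_mul_eq_one (by simp)]
  have ha := unit_inv_cancel a
  have hb := unit_inv_cancel b
  have key : C (b / (b - a)) * (1 - C a * X) + C (a / (a - b)) * (1 - C b * X) = 1 := by
    have hba : b - a ≠ 0 := sub_ne_zero.2 (Ne.symm hab)
    have h1 : b / (b - a) + a / (a - b) = 1 := by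
      rw [show a - b = -(b - a) by ring, div_neg, ← sub_eq_add_neg, div_sub_div_same,
        div_self hba]
    have h2 : b / (b - a) * a + a / (a - b) * b = 0 := by
      rw [show a - b = -(b - a) by ring, div_neg]
      ring
    calc C (b / (b - a)) * (1 - C a * X) + C (a / (a - b)) * (1 - C b * X)
        = C (b / (b - a) + a / (a - b))
          - C (b / (b - a) * a + a / (a - b) * b) * X := by
          simp only [map_add, map_mul]; ring
      _ = 1 := by rw [h1, h2]; simp
  calc (C (b / (b - a)) * (1 - C b * X)⁻¹ + C (a / (a - b)) * (1 - C a * X)⁻¹)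
        * ((1 - C b * X) * (1 - C a * X))
      = C (b / (b - a)) * (1 - C a * X) * ((1 - C b * X) * (1 - C b * X)⁻¹)
        + C (a / (a - b)) * (1 - C b * X) * ((1 - C a * X) * (1 - C a * X)⁻¹) := by
        ring
    _ = 1 := by rw [ha, hb, mul_one, mul_one, key]

lemma exists_bound_of_tendsto {f : ℕ → ℝ} (h : Tendsto f atTop (nhds 0)) :
    ∃ K : ℝ, 0 ≤ K ∧ ∀ n, |f n| ≤ K := by
  obtain ⟨N, hN⟩ := Metric.tendsto_atTop.1 h 1 one_pos
  refine ⟨1 + ∑ k ∈ range N, |f k|, by positivity, fun n => ?_⟩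
  rcases lt_or_ge n N with hn | hn
  · have h1 : |f n| ≤ ∑ k ∈ range N, |f k| :=
      Finset.single_le_sum (f := fun k => |f k|) (fun i _ => abs_nonneg (f i)) (mem_range.2 hn)
    linarith
  · have h1 := hN n hn
    rw [Real.dist_eq, sub_zero] at h1
    have h2 : (0:ℝ) ≤ ∑ k ∈ range N, |f k| := Finset.sum_nonneg fun i _ => abs_nonneg _
    linarith

lemma sum_ite_sub_le (n N : ℕ) (c : ℝ) (hc : 0 ≤ c) :
    ∑ k ∈ range (n + 1), (if n - k < N then c else 0) ≤ N * c := by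
  have h0 : ∑ k ∈ range (n + 1), (if n - k < N then c else 0)
      = ∑ j ∈ range (n + 1), (if j < N then c else 0) := by
    rw [← Finset.sum_range_reflect]
    refine Finset.sum_congr rfl fun j hj => ?_
    rw [mem_range] at hj
    have h1 : n + 1 - 1 - j = n - j := by omega
    rw [h1, Nat.sub_sub_self (by omega)]
  rw [h0, ← Finset.sum_filter]
  have h1 : (range (n + 1)).filter (· < N) ⊆ range N := by
    intro x hx
    simp only [mem_filter, mem_range] at hx ⊢
    exact hx.2
  calc ∑ _x ∈ (range (n + 1)).filter (· < N), c
      ≤ ∑ _x ∈ range N, c :=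
        Finset.sum_le_sum_of_subset_of_nonneg h1 (fun _ _ _ => hc)
    _ = N * c := by rw [Finset.sum_const, card_range, nsmul_eq_mul]

lemma geom_sum_le' {r : ℝ} (h0 : 0 ≤ r) (h1 : r < 1) (n : ℕ) :
    ∑ i ∈ range n, r ^ i ≤ 1 / (1 - r) := by
  have h' : (0:ℝ) < 1 - r := by linarith
  rw [geom_sum_eq (ne_of_lt h1), show r ^ n - 1 = -(1 - r ^ n) by ring,
    show r - 1 = -(1 - r) by ring, neg_div_neg_eq, div_le_div_iff₀ h' h']
  have : (0:ℝ) ≤ r ^ n := by positivity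
  nlinarith

lemma conv1 (P Q : ℕ) (u v : ℕ → ℝ) (K : ℝ) (hK : 0 ≤ K)
    (hu : ∀ k, |u k| ≤ K * ((k : ℝ) + 1) ^ P)
    (hv : Tendsto (fun n => v n / ((n : ℝ) + 1) ^ Q) atTop (nhds 0)) :
    Tendsto (fun n => (∑ k ∈ range (n + 1), u k * v (n - k)) / ((n : ℝ) + 1) ^ (P + Q + 1))
      atTop (nhds 0) := by
  obtain ⟨K', hK'0, hK'⟩ := exists_bound_of_tendsto hv
  have hvb : ∀ j, |v j| ≤ K' * ((j : ℝ) + 1) ^ Q := by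
    intro j
    have h1 := hK' j
    rw [abs_div, abs_of_pos (by positivity : (0:ℝ) < ((j:ℝ)+1)^Q)] at h1
    calc |v j| = |v j| / ((j:ℝ)+1)^Q * ((j:ℝ)+1)^Q := by
          field_simp
      _ ≤ K' * ((j : ℝ) + 1) ^ Q := by
          apply mul_le_mul_of_nonneg_right h1 (by positivity)
  rw [NormedAddCommGroup.tendsto_nhds_zero]
  intro ε hε
  have hε' : 0 < ε / (2 * (K + 1)) := by positivity
  set ε' := ε / (2 * (K + 1)) with hε'def
  obtain ⟨N, hN⟩ := Metric.tendsto_atTop.1 hv ε' hε'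
  have hvs : ∀ j, N ≤ j → |v j| ≤ ε' * ((j : ℝ) + 1) ^ Q := by
    intro j hj
    have h1 := hN j hj
    rw [Real.dist_eq, sub_zero, abs_div,
      abs_of_pos (by positivity : (0:ℝ) < ((j:ℝ)+1)^Q)] at h1
    calc |v j| = |v j| / ((j:ℝ)+1)^Q * ((j:ℝ)+1)^Q := by field_simp
      _ ≤ ε' * ((j : ℝ) + 1) ^ Q :=
          mul_le_mul_of_nonneg_right h1.le (by positivity)
  set CST := K * ((N : ℝ) * (K' * ((N:ℝ)) ^ Q)) with hCST
  have hCST0 : 0 ≤ CST := by positivity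
  have htail : Tendsto (fun n : ℕ => CST / ((n : ℝ) + 1)) atTop (nhds 0) := by
    simpa [div_eq_mul_inv] using (tendsto_one_div_add_atTop_nhds_zero_nat).const_mul CST
  have hev : ∀ᶠ n : ℕ in atTop, CST / ((n : ℝ) + 1) < ε / 2 := by
    refine (htail.eventually (eventually_lt_nhds (by positivity : (0:ℝ) < ε / 2)))
  filter_upwards [hev] with n hn
  have hpow : (0:ℝ) < ((n : ℝ) + 1) ^ (P + Q + 1) := by positivity
  -- main estimate
  have hterm : ∀ k ∈ range (n + 1),
      |u k * v (n - k)| ≤ K * ((n : ℝ) + 1) ^ P * (ε' * ((n : ℝ) + 1) ^ Q)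
        + (if n - k < N then K * ((n:ℝ)+1) ^ P * (K' * ((N:ℝ)) ^ Q) else 0) := by
    intro k hk
    rw [mem_range] at hk
    have hk' : (k : ℝ) + 1 ≤ (n : ℝ) + 1 := by
      have : (k:ℝ) ≤ n := by exact_mod_cast Nat.lt_succ_iff.1 hk
      linarith
    have hu' : |u k| ≤ K * ((n : ℝ) + 1) ^ P :=
      (hu k).trans (by
        apply mul_le_mul_of_nonneg_left _ hK
        exact pow_le_pow_left₀ (by positivity) hk' P)
    rw [abs_mul]
    by_cases hcase : n - k < N
    · rw [if_pos hcase]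
      have hv' : |v (n - k)| ≤ K' * ((N:ℝ)) ^ Q := by
        refine (hvb (n - k)).trans ?_
        apply mul_le_mul_of_nonneg_left _ hK'0
        apply pow_le_pow_left₀ (by positivity)
        have : (n - k : ℕ) + 1 ≤ N := hcase
        exact_mod_cast this
      have h2 : (0:ℝ) ≤ K * ((n : ℝ) + 1) ^ P * (ε' * ((n : ℝ) + 1) ^ Q) := by positivity
      have := mul_le_mul hu' hv' (abs_nonneg _) (by positivity)
      linarith
    · rw [if_neg hcase]
      have hv' : |v (n - k)| ≤ ε' * ((n:ℝ)+1) ^ Q := by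
        refine (hvs (n-k) (by omega)).trans ?_
        apply mul_le_mul_of_nonneg_left _ hε'.le
        apply pow_le_pow_left₀ (by positivity)
        have : ((n - k : ℕ) : ℝ) ≤ (n : ℝ) := by
          exact_mod_cast Nat.sub_le n k
        linarith
      have := mul_le_mul hu' hv' (abs_nonneg _) (by positivity)
      linarith
  have hsum : |∑ k ∈ range (n + 1), u k * v (n - k)|
      ≤ ((n:ℝ) + 1) * (K * ((n : ℝ) + 1) ^ P * (ε' * ((n : ℝ) + 1) ^ Q))
        + N * (K * ((n:ℝ)+1) ^ P * (K' * ((N:ℝ)) ^ Q)) := by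
    calc |∑ k ∈ range (n + 1), u k * v (n - k)|
        ≤ ∑ k ∈ range (n + 1), |u k * v (n - k)| := Finset.abs_sum_le_sum_abs _ _
      _ ≤ ∑ k ∈ range (n + 1), (K * ((n : ℝ) + 1) ^ P * (ε' * ((n : ℝ) + 1) ^ Q)
            + (if n - k < N then K * ((n:ℝ)+1) ^ P * (K' * ((N:ℝ)) ^ Q) else 0)) :=
          Finset.sum_le_sum hterm
      _ = (n + 1) * (K * ((n : ℝ) + 1) ^ P * (ε' * ((n : ℝ) + 1) ^ Q))
            + ∑ k ∈ range (n + 1), (if n - k < N then K * ((n:ℝ)+1) ^ P * (K' * ((N:ℝ)) ^ Q) else 0) := by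
          rw [Finset.sum_add_distrib, Finset.sum_const, card_range, nsmul_eq_mul]
          push_cast
          ring
      _ ≤ ((n:ℝ) + 1) * (K * ((n : ℝ) + 1) ^ P * (ε' * ((n : ℝ) + 1) ^ Q))
            + N * (K * ((n:ℝ)+1) ^ P * (K' * ((N:ℝ)) ^ Q)) := by
          have := sum_ite_sub_le n N (K * ((n:ℝ)+1) ^ P * (K' * ((N:ℝ)) ^ Q)) (by positivity)
          linarith
  have hn0 : (0:ℝ) < (n:ℝ) + 1 := by positivity
  rw [Real.norm_eq_abs, abs_div, abs_of_pos hpow, div_lt_iff₀ hpow]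
  have hre : ((n:ℝ) + 1) * (K * ((n:ℝ) + 1) ^ P * (ε' * ((n:ℝ) + 1) ^ Q))
      = ε' * K * ((n:ℝ)+1)^(P+Q+1) := by
    rw [pow_add, pow_add, pow_one]; ring
  have hre2 : (N:ℝ) * (K * ((n:ℝ)+1) ^ P * (K' * ((N:ℝ)) ^ Q)) = CST * ((n:ℝ)+1)^P := by
    rw [hCST]; ring
  have hP1 : CST * ((n:ℝ)+1)^P ≤ CST/((n:ℝ)+1) * ((n:ℝ)+1)^(P+Q+1) := by
    rw [div_mul_eq_mul_div, le_div_iff₀ hn0]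
    calc CST * ((n:ℝ)+1)^P * ((n:ℝ)+1) = CST * ((n:ℝ)+1)^(P+1) := by rw [pow_succ]; ring
      _ ≤ CST * ((n:ℝ)+1)^(P+Q+1) := by
          apply mul_le_mul_of_nonneg_left _ hCST0
          apply pow_le_pow_right₀ (by linarith) (by omega)
  calc |∑ k ∈ range (n + 1), u k * v (n - k)|
      ≤ ε' * K * ((n:ℝ)+1)^(P+Q+1) + CST/((n:ℝ)+1) * ((n:ℝ)+1)^(P+Q+1) := by
        rw [← hre]
        have := hre2 ▸ hP1
        linarith [hsum]
    _ = (ε' * K + CST/((n:ℝ)+1)) * ((n:ℝ)+1)^(P+Q+1) := by ring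
    _ < ε * ((n:ℝ)+1)^(P+Q+1) := by
        have hek : ε' * K < ε / 2 := by
          rw [hε'def, div_mul_eq_mul_div, div_lt_div_iff₀ (by positivity) (by norm_num : (0:ℝ) < 2)]
          nlinarith
        apply mul_lt_mul_of_pos_right _ hpow
        linarith


set_option maxHeartbeats 1000000 in
lemma conv2 (Q : ℕ) (u v : ℕ → ℝ) (K r : ℝ) (hK : 0 ≤ K) (hr0 : 0 ≤ r) (hr1 : r < 1)
    (hu : ∀ k, |u k| ≤ K * r ^ k)
    (hv : Tendsto (fun n => v n / ((n : ℝ) + 1) ^ Q) atTop (nhds 0)) :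
    Tendsto (fun n => (∑ k ∈ range (n + 1), u k * v (n - k)) / ((n : ℝ) + 1) ^ Q)
      atTop (nhds 0) := by
  obtain ⟨K', hK'0, hK'⟩ := exists_bound_of_tendsto hv
  have hvb : ∀ j, |v j| ≤ K' * ((j : ℝ) + 1) ^ Q := by
    intro j
    have h1 := hK' j
    rw [abs_div, abs_of_pos (by positivity : (0:ℝ) < ((j:ℝ)+1)^Q)] at h1
    calc |v j| = |v j| / ((j:ℝ)+1)^Q * ((j:ℝ)+1)^Q := by field_simp
      _ ≤ K' * ((j : ℝ) + 1) ^ Q := mul_le_mul_of_nonneg_right h1 (by positivity)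
  rw [NormedAddCommGroup.tendsto_nhds_zero]
  intro ε hε
  have h1r : (0:ℝ) < 1 - r := by linarith
  have hε' : 0 < ε * (1 - r) / (2 * (K + 1)) := by positivity
  set ε' := ε * (1 - r) / (2 * (K + 1)) with hε'def
  obtain ⟨N, hN⟩ := Metric.tendsto_atTop.1 hv ε' hε'
  have hvs : ∀ j, N ≤ j → |v j| ≤ ε' * ((j : ℝ) + 1) ^ Q := by
    intro j hj
    have h1 := hN j hj
    rw [Real.dist_eq, sub_zero, abs_div,
      abs_of_pos (by positivity : (0:ℝ) < ((j:ℝ)+1)^Q)] at h1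
    calc |v j| = |v j| / ((j:ℝ)+1)^Q * ((j:ℝ)+1)^Q := by field_simp
      _ ≤ ε' * ((j : ℝ) + 1) ^ Q := mul_le_mul_of_nonneg_right h1.le (by positivity)
  set CST := (N:ℝ) * (K * (K' * ((N:ℝ)) ^ Q)) with hCST
  have hCST0 : 0 ≤ CST := by positivity
  have htail : Tendsto (fun n : ℕ => CST * r ^ (n - N + 1)) atTop (nhds 0) := by
    have h2 : Tendsto (fun m : ℕ => r ^ m) atTop (nhds 0) :=
      tendsto_pow_atTop_nhds_zero_of_lt_one hr0 hr1
    have h3 : Tendsto (fun n : ℕ => n - N + 1) atTop atTop :=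
      tendsto_atTop_atTop.2 (fun b => ⟨b + N, fun a ha => by omega⟩)
    simpa using (h2.comp h3).const_mul CST
  have hev : ∀ᶠ n : ℕ in atTop, CST * r ^ (n - N + 1) < ε / 2 :=
    htail.eventually (eventually_lt_nhds (by positivity : (0:ℝ) < ε / 2))
  filter_upwards [hev, eventually_ge_atTop N] with n hn hnN
  have hpow : (0:ℝ) < ((n : ℝ) + 1) ^ Q := by positivity
  have hn0 : (0:ℝ) < (n:ℝ) + 1 := by positivity
  have hterm : ∀ k ∈ range (n + 1),
      |u k * v (n - k)| ≤ ε' * ((n : ℝ) + 1) ^ Q * (K * r ^ k)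
        + (if n - k < N then (K * r ^ (n - N + 1)) * (K' * ((N:ℝ)) ^ Q) else 0) := by
    intro k hk
    rw [mem_range] at hk
    rw [abs_mul]
    by_cases hcase : n - k < N
    · rw [if_pos hcase]
      have hv' : |v (n - k)| ≤ K' * ((N:ℝ)) ^ Q := by
        refine (hvb (n - k)).trans ?_
        apply mul_le_mul_of_nonneg_left _ hK'0
        apply pow_le_pow_left₀ (by positivity)
        exact_mod_cast (show (n - k : ℕ) + 1 ≤ N from hcase)
      have hu' : |u k| ≤ K * r ^ (n - N + 1) := by
        refine (hu k).trans ?_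
        apply mul_le_mul_of_nonneg_left _ hK
        apply pow_le_pow_of_le_one hr0 hr1.le
        omega
      have h2 : (0:ℝ) ≤ ε' * ((n : ℝ) + 1) ^ Q * (K * r ^ k) := by positivity
      have := mul_le_mul hu' hv' (abs_nonneg _) (by positivity)
      linarith
    · rw [if_neg hcase]
      have hv' : |v (n - k)| ≤ ε' * ((n:ℝ)+1) ^ Q := by
        refine (hvs (n-k) (by omega)).trans ?_
        apply mul_le_mul_of_nonneg_left _ hε'.le
        apply pow_le_pow_left₀ (by positivity)
        have : ((n - k : ℕ) : ℝ) ≤ (n : ℝ) := by exact_mod_cast Nat.sub_le n k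
        linarith
      have := mul_le_mul (hu k) hv' (abs_nonneg _) (by positivity)
      have h3 : (0:ℝ) ≤ K * r ^ k := by positivity
      nlinarith [this]
  have hsum : |∑ k ∈ range (n + 1), u k * v (n - k)|
      ≤ ε' * ((n:ℝ) + 1) ^ Q * (K * (1 / (1 - r)))
        + CST * r ^ (n - N + 1) := by
    calc |∑ k ∈ range (n + 1), u k * v (n - k)|
        ≤ ∑ k ∈ range (n + 1), |u k * v (n - k)| := Finset.abs_sum_le_sum_abs _ _
      _ ≤ ∑ k ∈ range (n + 1), (ε' * ((n : ℝ) + 1) ^ Q * (K * r ^ k)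
            + (if n - k < N then (K * r ^ (n - N + 1)) * (K' * ((N:ℝ)) ^ Q) else 0)) :=
          Finset.sum_le_sum hterm
      _ = ∑ k ∈ range (n + 1), (ε' * ((n : ℝ) + 1) ^ Q * K * r ^ k)
            + ∑ k ∈ range (n + 1),
              (if n - k < N then (K * r ^ (n - N + 1)) * (K' * ((N:ℝ)) ^ Q) else 0) := by
          rw [Finset.sum_add_distrib]
          congr 1
          exact Finset.sum_congr rfl fun k _ => by ring
      _ = ε' * ((n:ℝ) + 1) ^ Q * K * (∑ k ∈ range (n + 1), r ^ k)
            + ∑ k ∈ range (n + 1),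
              (if n - k < N then (K * r ^ (n - N + 1)) * (K' * ((N:ℝ)) ^ Q) else 0) := by
          rw [Finset.mul_sum]
      _ ≤ ε' * ((n:ℝ) + 1) ^ Q * (K * (1 / (1 - r))) + CST * r ^ (n - N + 1) := by
          have hg := geom_sum_le' hr0 hr1 (n + 1)
          have hs := sum_ite_sub_le n N ((K * r ^ (n - N + 1)) * (K' * ((N:ℝ)) ^ Q))
            (by positivity)
          have he1 : (0:ℝ) ≤ ε' * ((n:ℝ) + 1) ^ Q * K := by positivity
          have h4 : (N:ℝ) * (K * r ^ (n - N + 1) * (K' * (N:ℝ) ^ Q))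
              = CST * r ^ (n - N + 1) := by rw [hCST]; ring
          have h5 := mul_le_mul_of_nonneg_left hg he1
          rw [h4] at hs
          calc ε' * ((n:ℝ) + 1) ^ Q * K * (∑ k ∈ range (n + 1), r ^ k)
                + ∑ k ∈ range (n + 1),
                  (if n - k < N then (K * r ^ (n - N + 1)) * (K' * ((N:ℝ)) ^ Q) else 0)
              ≤ ε' * ((n:ℝ) + 1) ^ Q * K * (1 / (1 - r)) + CST * r ^ (n - N + 1) := by
                linarith
            _ = ε' * ((n:ℝ) + 1) ^ Q * (K * (1 / (1 - r))) + CST * r ^ (n - N + 1) := by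
                ring
  rw [Real.norm_eq_abs, abs_div, abs_of_pos hpow, div_lt_iff₀ hpow]
  have hek : ε' * (K * (1 / (1 - r))) < ε / 2 := by
    rw [hε'def]
    rw [div_mul_eq_mul_div, div_lt_div_iff₀ (by positivity) (by norm_num : (0:ℝ) < 2)]
    have hKK : K * (1 / (1 - r)) ≥ 0 := by positivity
    have expand : ε * (1 - r) * (K * (1 / (1 - r))) = ε * K := by field_simp
    nlinarith [hε.le]
  have hq1 : (1:ℝ) ≤ ((n:ℝ)+1)^Q := one_le_pow₀ (by linarith)
  calc |∑ k ∈ range (n + 1), u k * v (n - k)|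
      ≤ ε' * ((n:ℝ) + 1) ^ Q * (K * (1 / (1 - r))) + CST * r ^ (n - N + 1) := hsum
    _ ≤ ε' * (K * (1 / (1 - r))) * ((n:ℝ)+1)^Q + (ε/2) * ((n:ℝ)+1)^Q := by
        have h6 : CST * r ^ (n - N + 1) ≤ ε/2 * ((n:ℝ)+1)^Q := by
          calc CST * r ^ (n - N + 1) ≤ ε/2 := hn.le
            _ = ε/2 * 1 := by ring
            _ ≤ ε/2 * ((n:ℝ)+1)^Q := by
                apply mul_le_mul_of_nonneg_left hq1 (by linarith)
        linarith [h6]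
    _ < ε * ((n:ℝ)+1)^Q := by nlinarith [hek, hpow]


section Infra

def nseq (d : ℕ) (F : PowerSeries ℝ) : ℕ → ℝ := fun n => coeff n F / (d : ℝ) ^ n

def Ms (d m : ℕ) : PowerSeries ℝ := ((1 - C (d : ℝ) * X)⁻¹) ^ m

def Negl (d m : ℕ) (F : PowerSeries ℝ) : Prop :=
  Tendsto (fun n => nseq d F n / ((n : ℝ) + 1) ^ (m - 1)) atTop (nhds 0)

def Pp (d m : ℕ) (c : ℝ) (F : PowerSeries ℝ) : Prop := Negl d m (F - C c * Ms d m)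

variable {d : ℕ}

lemma nseq_add (F G : PowerSeries ℝ) (n : ℕ) :
    nseq d (F + G) n = nseq d F n + nseq d G n := by
  simp [nseq, add_div]

lemma nseq_sub (F G : PowerSeries ℝ) (n : ℕ) :
    nseq d (F - G) n = nseq d F n - nseq d G n := by
  simp [nseq, sub_div]

lemma nseq_Cmul (a : ℝ) (F : PowerSeries ℝ) (n : ℕ) :
    nseq d (C a * F) n = a * nseq d F n := by
  simp [nseq, coeff_C_mul, mul_div_assoc]

lemma nseq_mul (hd : 1 ≤ d) (F G : PowerSeries ℝ) (n : ℕ) :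
    nseq d (F * G) n = ∑ k ∈ range (n + 1), nseq d F k * nseq d G (n - k) := by
  have hd0 : ((d : ℝ)) ≠ 0 := by
    have : (1:ℝ) ≤ (d:ℝ) := by exact_mod_cast hd
    linarith
  unfold nseq
  rw [coeff_mul, Finset.Nat.sum_antidiagonal_eq_sum_range_succ_mk, Finset.sum_div]
  refine Finset.sum_congr rfl fun k hk => ?_
  rw [mem_range] at hk
  rw [div_mul_div_comm, ← pow_add, Nat.add_sub_cancel' (by omega : k ≤ n)]

lemma Negl.add {m : ℕ} {F G : PowerSeries ℝ} (hF : Negl d m F) (hG : Negl d m G) :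
    Negl d m (F + G) := by
  unfold Negl at hF hG ⊢
  have := hF.add hG
  rw [add_zero] at this
  refine this.congr fun n => ?_
  rw [nseq_add, add_div]

lemma Negl.neg {m : ℕ} {F : PowerSeries ℝ} (hF : Negl d m F) : Negl d m (-F) := by
  unfold Negl at hF ⊢
  have := hF.neg
  rw [neg_zero] at this
  refine this.congr fun n => ?_
  have : nseq d (-F) n = -nseq d F n := by simp [nseq, neg_div]
  rw [this, neg_div]

lemma Negl.sub {m : ℕ} {F G : PowerSeries ℝ} (hF : Negl d m F) (hG : Negl d m G) :
    Negl d m (F - G) := by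
  rw [sub_eq_add_neg]
  exact Negl.add hF (Negl.neg hG)

lemma Negl.Cmul {m : ℕ} {F : PowerSeries ℝ} (a : ℝ) (hF : Negl d m F) :
    Negl d m (C a * F) := by
  unfold Negl at hF ⊢
  have := hF.const_mul a
  rw [mul_zero] at this
  refine this.congr fun n => ?_
  rw [nseq_Cmul, mul_div_assoc]

lemma Negl.zero (m : ℕ) : Negl d m (0 : PowerSeries ℝ) := by
  unfold Negl
  have : ∀ n : ℕ, nseq d (0 : PowerSeries ℝ) n / ((n:ℝ)+1) ^ (m-1) = 0 := by
    intro n; simp [nseq]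
  simpa [this] using tendsto_const_nhds

lemma Negl.congr {m : ℕ} {F G : PowerSeries ℝ} (hF : Negl d m F) (h : F = G) :
    Negl d m G := h ▸ hF

lemma Negl.mono {m m' : ℕ} {F : PowerSeries ℝ} (hF : Negl d m F) (h : m ≤ m') :
    Negl d m' F := by
  unfold Negl at hF ⊢
  have habs := hF.abs
  rw [abs_zero] at habs
  apply squeeze_zero_norm _ habs
  intro n
  rw [Real.norm_eq_abs, abs_div, abs_div,
    abs_of_pos (by positivity : (0:ℝ) < ((n:ℝ)+1)^(m'-1)),
    abs_of_pos (by positivity : (0:ℝ) < ((n:ℝ)+1)^(m-1))]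
  apply div_le_div_of_nonneg_left (abs_nonneg _) (by positivity)
  apply pow_le_pow_right₀ (by norm_num [Nat.cast_nonneg]) (by omega)

lemma Negl.one (m : ℕ) : Negl d m (1 : PowerSeries ℝ) := by
  unfold Negl
  apply Tendsto.congr' _ (tendsto_const_nhds (x := (0:ℝ)))
  filter_upwards [eventually_ge_atTop 1] with n hn
  have : (coeff n) (1 : PowerSeries ℝ) = 0 := by
    rw [coeff_one, if_neg (by omega)]
  simp [nseq, this]

lemma Negl.X_mul {m : ℕ} {F : PowerSeries ℝ} (hd : 1 ≤ d) (hF : Negl d m F) :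
    Negl d m (X * F) := by
  unfold Negl at hF ⊢
  have hd1 : (1:ℝ) ≤ (d:ℝ) := by exact_mod_cast hd
  have habs := hF.abs
  rw [abs_zero] at habs
  apply squeeze_zero_norm _ (habs.comp (tendsto_sub_atTop_nat 1))
  intro n
  rcases n with _ | n
  · simp [nseq]
  · have h1 : nseq d (X * F) (n+1) = nseq d F n / d := by
      rw [show nseq d (X * F) (n+1) = coeff (n+1) (X * F) / (d:ℝ)^(n+1) from rfl,
        coeff_succ_X_mul, pow_succ]
      rw [show nseq d F n = coeff n F / (d:ℝ)^n from rfl]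
      rw [div_div]
    have h2 : ((n+1 : ℕ)) - 1 = n := by omega
    rw [Function.comp_apply, h2, Real.norm_eq_abs, h1, div_div, abs_div, abs_div]
    apply div_le_div_of_nonneg_left (abs_nonneg _)
      (by positivity : (0:ℝ) < |((n:ℝ)+1)^(m-1)|)
    have e2 : ((n:ℝ)+1)^(m-1) ≤ ((((n+1):ℕ):ℝ)+1)^(m-1) := by
      apply pow_le_pow_left₀ (by positivity)
      push_cast; linarith
    rw [abs_of_pos (by positivity : (0:ℝ) < ((n:ℝ)+1)^(m-1)),
      abs_of_pos (by positivity : (0:ℝ) < (d:ℝ) * ((((n+1):ℕ):ℝ)+1)^(m-1))]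
    calc ((n:ℝ)+1)^(m-1) = 1 * ((n:ℝ)+1)^(m-1) := by ring
      _ ≤ (d:ℝ) * ((((n+1):ℕ):ℝ)+1)^(m-1) := by
          apply mul_le_mul hd1 e2 (by positivity) (by linarith)

lemma Negl.inv_lt {b : ℕ} (hb : b < d) (m : ℕ) :
    Negl d m ((1 - C (b:ℝ) * X)⁻¹) := by
  unfold Negl
  have hd0 : (0:ℝ) < (d:ℝ) := by
    have : 0 < d := by omega
    exact_mod_cast this
  have hbd : (0:ℝ) ≤ (b:ℝ)/(d:ℝ) := by positivity
  have hbd1 : (b:ℝ)/(d:ℝ) < 1 := by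
    rw [div_lt_one hd0]
    exact_mod_cast hb
  apply squeeze_zero_norm _ (tendsto_pow_atTop_nhds_zero_of_lt_one hbd hbd1)
  intro n
  have h1 : nseq d ((1 - C (b:ℝ) * X)⁻¹) n = ((b:ℝ)/(d:ℝ))^n := by
    rw [show nseq d ((1 - C (b:ℝ) * X)⁻¹) n
        = coeff n ((1 - C (b:ℝ) * X)⁻¹) / (d:ℝ)^n from rfl,
      coeff_inv_one_sub, div_pow]
  rw [Real.norm_eq_abs, h1, abs_div, abs_of_pos (by positivity : (0:ℝ) < ((n:ℝ)+1)^(m-1)),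
    abs_of_nonneg (by positivity : (0:ℝ) ≤ ((b:ℝ)/(d:ℝ))^n)]
  calc ((b:ℝ)/(d:ℝ))^n / ((n:ℝ)+1)^(m-1) ≤ ((b:ℝ)/(d:ℝ))^n / 1 := by
        apply div_le_div_of_nonneg_left (by positivity) (by norm_num) (one_le_pow₀ (by norm_num [Nat.cast_nonneg]))
    _ = ((b:ℝ)/(d:ℝ))^n := by ring


lemma abs_le_mul_of_div_le {x B K : ℝ} (hB : 0 < B) (h : |x / B| ≤ K) : |x| ≤ K * B := by
  rw [abs_div, abs_of_pos hB, div_le_iff₀ hB] at h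
  exact h

lemma nseq_Ms_eq (hd : 1 ≤ d) (m n : ℕ) :
    nseq d (Ms d (m+1)) n = ((n + m).choose m : ℝ) := by
  have hd0 : ((d:ℝ)) ≠ 0 := by
    have : (1:ℝ) ≤ (d:ℝ) := by exact_mod_cast hd
    linarith
  rw [show nseq d (Ms d (m+1)) n = coeff n (Ms d (m+1)) / (d:ℝ)^n from rfl]
  rw [Ms, coeff_inv_pow, mul_div_assoc, div_self (pow_ne_zero n hd0), mul_one]

lemma choose_le_bound (m n : ℕ) :
    ((n + m).choose m : ℝ) ≤ ((m:ℝ)+1)^m * ((n:ℝ)+1)^m := by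
  have h1 : ((n + m).choose m : ℝ) ≤ ((n:ℝ) + m)^m := by
    have := Nat.choose_le_pow (n + m) m
    calc ((n + m).choose m : ℝ) ≤ (((n + m)^m : ℕ) : ℝ) := by exact_mod_cast this
      _ = ((n:ℝ) + m)^m := by push_cast; ring
  refine h1.trans ?_
  rw [← mul_pow]
  apply pow_le_pow_left₀ (by positivity)
  have h2 : (0:ℝ) ≤ (n:ℝ) := Nat.cast_nonneg n
  have h3 : (0:ℝ) ≤ (m:ℝ) := Nat.cast_nonneg m
  nlinarith

lemma nseq_Ms_le (hd : 1 ≤ d) (m n : ℕ) :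
    |nseq d (Ms d (m+1)) n| ≤ ((m:ℝ)+1)^m * ((n:ℝ)+1)^m := by
  rw [nseq_Ms_eq hd, abs_of_nonneg (by positivity)]
  exact choose_le_bound m n

lemma Negl_Ms (hd : 1 ≤ d) (m : ℕ) : Negl d (m+1) (Ms d m) := by
  rcases m with _ | m
  · exact (Negl.one 1).congr (pow_zero _).symm
  · unfold Negl
    have hc : Tendsto (fun n : ℕ => ((m:ℝ)+1)^m / ((n:ℝ) + 1)) atTop (nhds 0) := by
      simpa [div_eq_mul_inv] using (tendsto_one_div_add_atTop_nhds_zero_nat).const_mul (((m:ℝ)+1)^m)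
    apply squeeze_zero_norm _ hc
    intro n
    rw [Real.norm_eq_abs, abs_div, abs_of_pos (by positivity : (0:ℝ) < ((n:ℝ)+1)^(m+1+1-1))]
    have h1 := nseq_Ms_le hd m n
    have h2 : ((n:ℝ)+1)^(m+1+1-1) = ((n:ℝ)+1)^m * ((n:ℝ)+1) := by
      rw [show m+1+1-1 = m+1 from rfl, pow_succ]
    rw [h2, div_le_div_iff₀ (by positivity) (by positivity)]
    calc |nseq d (Ms d (m+1)) n| * ((n:ℝ)+1)
        ≤ (((m:ℝ)+1)^m * ((n:ℝ)+1)^m) * ((n:ℝ)+1) := by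
          apply mul_le_mul_of_nonneg_right h1 (by positivity)
      _ = ((m:ℝ)+1)^m * (((n:ℝ)+1)^m * ((n:ℝ)+1)) := by ring
  -- done

lemma nseq_inv_d (hd : 1 ≤ d) (n : ℕ) :
    nseq d ((1 - C (d:ℝ) * X)⁻¹) n = 1 := by
  have hd0 : ((d:ℝ)) ≠ 0 := by
    have : (1:ℝ) ≤ (d:ℝ) := by exact_mod_cast hd
    linarith
  rw [show nseq d ((1 - C (d:ℝ) * X)⁻¹) n
      = coeff n ((1 - C (d:ℝ) * X)⁻¹) / (d:ℝ)^n from rfl,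
    coeff_inv_one_sub, div_self (pow_ne_zero n hd0)]

lemma Negl.mul_bound (hd : 1 ≤ d) {P Q : ℕ} {K : ℝ} {F G : PowerSeries ℝ} (hK : 0 ≤ K)
    (hF : ∀ n, |nseq d F n| ≤ K * ((n:ℝ)+1)^P) (hG : Negl d (Q+1) G) :
    Negl d (P+Q+2) (F * G) := by
  unfold Negl at hG ⊢
  simp only [Nat.add_sub_cancel] at hG
  have := conv1 P Q (nseq d F) (nseq d G) K hK hF hG
  refine this.congr fun n => ?_
  rw [show P+Q+2-1 = P+Q+1 from rfl, nseq_mul hd]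

lemma Negl.geom_mul {b : ℕ} (hb : b < d) {Q : ℕ} {G : PowerSeries ℝ}
    (hG : Negl d (Q+1) G) :
    Negl d (Q+1) ((1 - C (b:ℝ) * X)⁻¹ * G) := by
  have hd : 1 ≤ d := by omega
  have hd0 : (0:ℝ) < (d:ℝ) := by
    have : 0 < d := by omega
    exact_mod_cast this
  have hbd : (0:ℝ) ≤ (b:ℝ)/(d:ℝ) := by positivity
  have hbd1 : (b:ℝ)/(d:ℝ) < 1 := by
    rw [div_lt_one hd0]
    exact_mod_cast hb
  unfold Negl at hG ⊢
  simp only [Nat.add_sub_cancel] at hG ⊢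
  have hu : ∀ k, |nseq d ((1 - C (b:ℝ) * X)⁻¹) k| ≤ 1 * ((b:ℝ)/(d:ℝ))^k := by
    intro k
    rw [show nseq d ((1 - C (b:ℝ) * X)⁻¹) k
        = coeff k ((1 - C (b:ℝ) * X)⁻¹) / (d:ℝ)^k from rfl,
      coeff_inv_one_sub, ← div_pow, one_mul, abs_of_nonneg (by positivity)]
  have := conv2 Q (nseq d ((1 - C (b:ℝ) * X)⁻¹)) (nseq d G) 1 ((b:ℝ)/(d:ℝ))
    one_pos.le hbd hbd1 hu hG
  refine this.congr fun n => ?_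
  rw [nseq_mul hd]

lemma inv_mul_Ms {b : ℕ} (hb : b < d) :
    ∀ m, 1 ≤ m →
      Negl d m ((1 - C (b:ℝ) * X)⁻¹ * Ms d m
        - C ((d:ℝ)/((d:ℝ)-(b:ℝ))) * Ms d m) := by
  have hd : 1 ≤ d := by omega
  have hbd : (b:ℝ) ≠ (d:ℝ) := by
    have : b ≠ d := by omega
    exact_mod_cast this
  intro m hm
  induction m, hm using Nat.le_induction with
  | base =>
    have hpf := partial_frac (b:ℝ) (d:ℝ) hbd
    have h1 : (1 - C (b:ℝ) * X)⁻¹ * Ms d 1 - C ((d:ℝ)/((d:ℝ)-(b:ℝ))) * Ms d 1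
        = C ((b:ℝ)/((b:ℝ)-(d:ℝ))) * (1 - C (b:ℝ) * X)⁻¹ := by
      rw [Ms, pow_one, hpf]
      ring
    rw [h1]
    exact Negl.Cmul _ (Negl.inv_lt hb 1)
  | succ m hm ih =>
    obtain ⟨Q, rfl⟩ : ∃ Q, m = Q + 1 := ⟨m - 1, by omega⟩
    have key : (1 - C (b:ℝ) * X)⁻¹ * Ms d (Q+1+1)
        - C ((d:ℝ)/((d:ℝ)-(b:ℝ))) * Ms d (Q+1+1)
        = (1 - C (d:ℝ) * X)⁻¹ *
          ((1 - C (b:ℝ) * X)⁻¹ * Ms d (Q+1)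
            - C ((d:ℝ)/((d:ℝ)-(b:ℝ))) * Ms d (Q+1)) := by
      rw [Ms, Ms, pow_succ]
      ring
    rw [key]
    have hu : ∀ n, |nseq d ((1 - C (d:ℝ) * X)⁻¹) n| ≤ 1 * ((n:ℝ)+1)^0 := by
      intro n
      rw [nseq_inv_d hd]
      simp
    have h2 := Negl.mul_bound hd one_pos.le hu ih
    have h3 : 0 + Q + 2 = Q + 1 + 1 := by omega
    rw [h3] at h2
    exact h2


lemma Pp.congr_c {m : ℕ} {c c' : ℝ} {F : PowerSeries ℝ} (h : Pp d m c F) (he : c = c') :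
    Pp d m c' F := he ▸ h

lemma Pp.congr_F {m : ℕ} {c : ℝ} {F G : PowerSeries ℝ} (h : Pp d m c F) (he : F = G) :
    Pp d m c G := he ▸ h

lemma Pp.bound (hd : 1 ≤ d) {m : ℕ} {c : ℝ} {F : PowerSeries ℝ} (hm : 1 ≤ m)
    (h : Pp d m c F) :
    ∃ K, 0 ≤ K ∧ ∀ n, |nseq d F n| ≤ K * ((n:ℝ)+1)^(m-1) := by
  obtain ⟨Q, rfl⟩ : ∃ Q, m = Q + 1 := ⟨m-1, by omega⟩
  unfold Pp Negl at h
  obtain ⟨K₁, hK₁0, hK₁⟩ := exists_bound_of_tendsto h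
  refine ⟨K₁ + |c| * ((Q:ℝ)+1)^Q, by positivity, fun n => ?_⟩
  simp only [Nat.add_sub_cancel] at hK₁ ⊢
  have h1 : |nseq d (F - C c * Ms d (Q+1)) n| ≤ K₁ * ((n:ℝ)+1)^Q :=
    abs_le_mul_of_div_le (by positivity) (hK₁ n)
  have h2 : nseq d F n = nseq d (F - C c * Ms d (Q+1)) n + c * nseq d (Ms d (Q+1)) n := by
    rw [nseq_sub, nseq_Cmul]; ring
  have h3 := nseq_Ms_le hd Q n
  calc |nseq d F n|
      ≤ |nseq d (F - C c * Ms d (Q+1)) n| + |c * nseq d (Ms d (Q+1)) n| := by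
        rw [h2]; exact abs_add_le _ _
    _ ≤ K₁ * ((n:ℝ)+1)^Q + |c| * (((Q:ℝ)+1)^Q * ((n:ℝ)+1)^Q) := by
        rw [abs_mul]
        have := mul_le_mul_of_nonneg_left h3 (abs_nonneg c)
        linarith
    _ = (K₁ + |c| * ((Q:ℝ)+1)^Q) * ((n:ℝ)+1)^Q := by ring

lemma Pp.mul (hd : 1 ≤ d) {p q : ℕ} {c e : ℝ} {F G : PowerSeries ℝ} (hp : 1 ≤ p) (hq : 1 ≤ q)
    (hF : Pp d p c F) (hG : Pp d q e G) : Pp d (p+q) (c*e) (F*G) := by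
  obtain ⟨KF, hKF0, hKF⟩ := Pp.bound hd hp hF
  obtain ⟨QG, rfl⟩ : ∃ Q, q = Q + 1 := ⟨q-1, by omega⟩
  obtain ⟨QF, rfl⟩ : ∃ Q, p = Q + 1 := ⟨p-1, by omega⟩
  simp only [Nat.add_sub_cancel] at hKF
  have hBb : ∀ n, |nseq d (C e * Ms d (QG+1)) n|
      ≤ (|e| * ((QG:ℝ)+1)^QG) * ((n:ℝ)+1)^QG := by
    intro n
    rw [nseq_Cmul, abs_mul]
    calc |e| * |nseq d (Ms d (QG+1)) n|
        ≤ |e| * (((QG:ℝ)+1)^QG * ((n:ℝ)+1)^QG) :=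
          mul_le_mul_of_nonneg_left (nseq_Ms_le hd QG n) (abs_nonneg e)
      _ = (|e| * ((QG:ℝ)+1)^QG) * ((n:ℝ)+1)^QG := by ring
  unfold Pp at hF hG ⊢
  have key : F * G - C (c*e) * Ms d (QF+1+(QG+1))
      = F * (G - C e * Ms d (QG+1))
        + (C e * Ms d (QG+1)) * (F - C c * Ms d (QF+1)) := by
    have hMM : Ms d (QF+1) * Ms d (QG+1) = Ms d (QF+1+(QG+1)) := by
      rw [Ms, Ms, Ms, ← pow_add]
    rw [map_mul, ← hMM]
    ring
  rw [key]
  have h1 : Negl d (QF+QG+2) (F * (G - C e * Ms d (QG+1))) :=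
    Negl.mul_bound hd hKF0 hKF hG
  have h2 : Negl d (QG+QF+2) ((C e * Ms d (QG+1)) * (F - C c * Ms d (QF+1))) :=
    Negl.mul_bound hd (by positivity) hBb hF
  have e1 : QF+QG+2 = QF+1+(QG+1) := by omega
  have e2 : QG+QF+2 = QF+1+(QG+1) := by omega
  rw [e1] at h1
  rw [e2] at h2
  exact h1.add h2

lemma Pp.add {m : ℕ} {c e : ℝ} {F G : PowerSeries ℝ} (hF : Pp d m c F) (hG : Pp d m e G) :
    Pp d m (c+e) (F+G) := by
  unfold Pp at *
  have key : F + G - C (c+e) * Ms d m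
      = (F - C c * Ms d m) + (G - C e * Ms d m) := by
    rw [map_add]; ring
  rw [key]
  exact hF.add hG

lemma Pp.sub {m : ℕ} {c e : ℝ} {F G : PowerSeries ℝ} (hF : Pp d m c F) (hG : Pp d m e G) :
    Pp d m (c-e) (F-G) := by
  unfold Pp at *
  have key : F - G - C (c-e) * Ms d m
      = (F - C c * Ms d m) - (G - C e * Ms d m) := by
    rw [map_sub]; ring
  rw [key]
  exact hF.sub hG

lemma Pp.Cmul {m : ℕ} {c : ℝ} {F : PowerSeries ℝ} (a : ℝ) (hF : Pp d m c F) :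
    Pp d m (a*c) (C a * F) := by
  unfold Pp at *
  have key : C a * F - C (a*c) * Ms d m = C a * (F - C c * Ms d m) := by
    rw [map_mul]; ring
  rw [key]
  exact Negl.Cmul a hF

lemma Pp.one_add {m : ℕ} {c : ℝ} {F : PowerSeries ℝ} (hF : Pp d m c F) : Pp d m c (1 + F) := by
  unfold Pp at *
  have key : 1 + F - C c * Ms d m = (F - C c * Ms d m) + 1 := by ring
  rw [key]
  exact hF.add (Negl.one m)

lemma Ms_pred (hd : 1 ≤ d) {m : ℕ} (hm : 1 ≤ m) :
    (1 - C (d:ℝ) * X) * Ms d m = Ms d (m-1) := by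
  obtain ⟨Q, rfl⟩ : ∃ Q, m = Q+1 := ⟨m-1, by omega⟩
  rw [Nat.add_sub_cancel, Ms, Ms, pow_succ]
  calc (1 - C (d:ℝ) * X) * ((1 - C (d:ℝ) * X)⁻¹ ^ Q * (1 - C (d:ℝ) * X)⁻¹)
      = ((1 - C (d:ℝ) * X) * (1 - C (d:ℝ) * X)⁻¹) * (1 - C (d:ℝ) * X)⁻¹ ^ Q := by
        ring
    _ = (1 - C (d:ℝ) * X)⁻¹ ^ Q := by rw [unit_inv_cancel, one_mul]

lemma Pp.X_mul (hd : 1 ≤ d) {m : ℕ} {c : ℝ} {F : PowerSeries ℝ} (hm : 1 ≤ m)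
    (hF : Pp d m c F) : Pp d m (c/(d:ℝ)) (X * F) := by
  have hd1 : (1:ℝ) ≤ (d:ℝ) := by exact_mod_cast hd
  have hd0 : ((d:ℝ)) ≠ 0 := by linarith
  unfold Pp at *
  have hpred := Ms_pred hd hm
  have hC : C (c/(d:ℝ)) * C (d:ℝ) = C c := by
    rw [← map_mul, div_mul_cancel₀ _ hd0]
  have key : X * F - C (c/(d:ℝ)) * Ms d m
      = X * (F - C c * Ms d m) - C (c/(d:ℝ)) * Ms d (m-1) := by
    rw [← hpred]
    linear_combination (-(X * Ms d m)) * hC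
  rw [key]
  have h2 : Negl d m (Ms d (m-1)) := by
    obtain ⟨Q, rfl⟩ : ∃ Q, m = Q+1 := ⟨m-1, by omega⟩
    rw [Nat.add_sub_cancel]
    exact Negl_Ms hd Q
  exact (Negl.X_mul hd hF).sub (Negl.Cmul _ h2)

lemma Pp.one_sub_X_mul (hd : 1 ≤ d) {m : ℕ} {c : ℝ} {F : PowerSeries ℝ} (hm : 1 ≤ m)
    (hF : Pp d m c F) : Pp d m (c - c/(d:ℝ)) ((1 - X) * F) := by
  have h1 := Pp.X_mul hd hm hF
  have key : (1 - X) * F = F - X * F := by ring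
  rw [key]
  exact hF.sub h1

lemma Pp.inv_mul {b : ℕ} (hb : b < d) {m : ℕ} {c : ℝ} {F : PowerSeries ℝ} (hm : 1 ≤ m)
    (hF : Pp d m c F) :
    Pp d m (c * ((d:ℝ)/((d:ℝ)-(b:ℝ)))) ((1 - C (b:ℝ) * X)⁻¹ * F) := by
  unfold Pp at *
  have key : (1 - C (b:ℝ) * X)⁻¹ * F - C (c * ((d:ℝ)/((d:ℝ)-(b:ℝ)))) * Ms d m
      = (1 - C (b:ℝ) * X)⁻¹ * (F - C c * Ms d m)
        + C c * ((1 - C (b:ℝ) * X)⁻¹ * Ms d m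
            - C ((d:ℝ)/((d:ℝ)-(b:ℝ))) * Ms d m) := by
    rw [map_mul]
    ring
  rw [key]
  obtain ⟨Q, rfl⟩ : ∃ Q, m = Q+1 := ⟨m-1, by omega⟩
  exact (Negl.geom_mul hb hF).add (Negl.Cmul _ (inv_mul_Ms hb _ (by omega)))

lemma Pp.Ms_one : Pp d 1 1 (Ms d 1) := by
  unfold Pp
  rw [map_one, one_mul, sub_self]
  exact Negl.zero 1


lemma aux_P {d : ℕ} (hd : 2 ≤ d) : ∀ k, k ≤ d - 1 →
    Pp d (2^k) ((((d:ℝ)-1)/(d:ℝ))^(2^k - 1)) (boundaryAux d k) := by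
  have hd1 : 1 ≤ d := by omega
  have hdR : (2:ℝ) ≤ (d:ℝ) := by exact_mod_cast hd
  have hd0 : ((d:ℝ)) ≠ 0 := by linarith
  intro k
  induction k with
  | zero =>
    intro _
    simp only [pow_zero, pow_one]
    refine Pp.congr_F Pp.Ms_one ?_
    rw [Ms, pow_one, map_natCast]
    rfl
  | succ k ih =>
    intro hk
    have hIH := ih (by omega)
    set ν : ℝ := ((d:ℝ)-1)/(d:ℝ) with hν
    set b : ℕ := d - (k+1) with hbdef
    have hb : b < d := by omega
    have hbR : ((b:ℕ):ℝ) = (d:ℝ) - ((k:ℝ)+1) := by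
      rw [hbdef, Nat.cast_sub (by omega : k+1 ≤ d)]
      push_cast
      ring
    have h1pk : 1 ≤ 2^k := Nat.one_le_two_pow
    have h1m : 1 ≤ 2^(k+1) := Nat.one_le_two_pow
    have hpowsplit : 2^k + 2^k = 2^(k+1) := by rw [pow_succ]; ring
    have hg2 : Pp d (2^(k+1)) (ν^(2^k - 1) * ν^(2^k - 1))
        (boundaryAux d k * boundaryAux d k) := by
      have := Pp.mul hd1 h1pk h1pk hIH hIH
      rwa [hpowsplit] at this
    have h3 := Pp.one_sub_X_mul hd1 h1m hg2
    have h4 := Pp.X_mul hd1 h1m h3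
    have h5 := Pp.Cmul (((k+1:ℕ):ℝ)) h4
    have h6 := Pp.one_add h5
    have h7 := Pp.inv_mul hb h1m h6
    refine (h7.congr_c ?_).congr_F ?_
    · -- constant computation
      have h2m : 2 ≤ 2^(k+1) := by
        calc 2 = 2^1 := by norm_num
          _ ≤ 2^(k+1) := Nat.pow_le_pow_right (by norm_num) (by omega)
      have hx : ν^(2^k - 1) * ν^(2^k - 1) = ν^(2^(k+1) - 2) := by
        rw [← pow_add]
        congr 1
        omega
      have hsucc : ν^(2^(k+1) - 2) * ν = ν^(2^(k+1) - 1) := by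
        rw [← pow_succ]
        congr 1
        omega
      rw [hx, hbR]
      rw [← hsucc, hν]
      have hk0 : ((k:ℝ)+1) ≠ 0 := by positivity
      push_cast
      field_simp
      ring
    · -- power series identity
      have hc1 : ((b:ℕ) : PowerSeries ℝ) = C ((b:ℕ):ℝ) := (map_natCast (C (R := ℝ)) b).symm
      have hc2 : (((k+1):ℕ) : PowerSeries ℝ) = C (((k+1):ℕ):ℝ) :=
        (map_natCast (C (R := ℝ)) (k+1)).symm
      show (1 - C ((b:ℕ):ℝ) * X)⁻¹ *
          (1 + C (((k+1):ℕ):ℝ) * (X * ((1 - X) * (boundaryAux d k * boundaryAux d k))))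
          = boundaryAux d (k+1)
      rw [show boundaryAux d (k+1) = (1 - ((d - (k + 1) : ℕ) : PowerSeries ℝ) * X)⁻¹ *
          (1 + ((k + 1 : ℕ) : PowerSeries ℝ) * X * (1 - X) * (boundaryAux d k) ^ 2) from rfl]
      rw [← hbdef, hc1, hc2]
      rw [pow_two]
      ring

lemma GF_P {d : ℕ} (hd : 2 ≤ d) :
    Pp d (2^d) ((((d:ℝ)-1)/(d:ℝ))^(2^d - 1)) (boundaryGF d) := by
  have hd1 : 1 ≤ d := by omega
  have hdR : (2:ℝ) ≤ (d:ℝ) := by exact_mod_cast hd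
  have hd0 : ((d:ℝ)) ≠ 0 := by linarith
  set ν : ℝ := ((d:ℝ)-1)/(d:ℝ) with hν
  have hIH := aux_P hd (d-1) le_rfl
  have h1pk : 1 ≤ 2^(d-1) := Nat.one_le_two_pow
  have h1m : 1 ≤ 2^d := Nat.one_le_two_pow
  have hpowsplit : 2^(d-1) + 2^(d-1) = 2^d := by
    have h : 2^d = 2^(d-1) * 2 := by
      rw [← pow_succ]
      congr 1
      omega
    rw [h]
    ring
  have hg2 : Pp d (2^d) (ν^(2^(d-1) - 1) * ν^(2^(d-1) - 1))
      (boundaryAux d (d-1) * boundaryAux d (d-1)) := by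
    have := Pp.mul hd1 h1pk h1pk hIH hIH
    rwa [hpowsplit] at this
  have h3 := Pp.one_sub_X_mul hd1 h1m hg2
  have h4 := Pp.X_mul hd1 h1m h3
  have h5 := Pp.Cmul (((d:ℕ):ℝ)) h4
  have h6 := Pp.one_add h5
  refine (h6.congr_c ?_).congr_F ?_
  · have h2m : 2 ≤ 2^d := by
      calc 2 = 2^1 := by norm_num
        _ ≤ 2^d := Nat.pow_le_pow_right (by norm_num) (by omega)
    have hx : ν^(2^(d-1) - 1) * ν^(2^(d-1) - 1) = ν^(2^d - 2) := by
      rw [← pow_add]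
      congr 1
      omega
    have hsucc : ν^(2^d - 2) * ν = ν^(2^d - 1) := by
      rw [← pow_succ]
      congr 1
      omega
    rw [hx, ← hsucc, hν]
    field_simp
  · have hc2 : ((d:ℕ) : PowerSeries ℝ) = C ((d:ℕ):ℝ) := (map_natCast (C (R := ℝ)) d).symm
    show 1 + C ((d:ℕ):ℝ) * (X * ((1 - X) * (boundaryAux d (d-1) * boundaryAux d (d-1))))
        = boundaryGF d
    rw [boundaryGF, hc2, pow_two]
    ring

lemma fact_aux : ∀ e n : ℕ, Nat.factorial (n+e) = Nat.factorial n * ∏ i ∈ range e, (n+1+i) := by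
  intro e
  induction e with
  | zero => simp
  | succ e ih =>
    intro n
    rw [show n + (e+1) = (n+e)+1 by omega, Nat.factorial_succ, ih n, Finset.prod_range_succ]
    ring

lemma choose_fact (e n : ℕ) : ((n+e).choose e) * Nat.factorial e = ∏ i ∈ range e, (n+1+i) := by
  have h1 := Nat.choose_mul_factorial_mul_factorial (show e ≤ n+e by omega)
  rw [Nat.add_sub_cancel] at h1
  have h2 := fact_aux e n
  have h3 : (((n+e).choose e) * Nat.factorial e) * Nat.factorial n = (∏ i ∈ range e, (n+1+i)) * Nat.factorial n := by
    rw [h1, h2]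
    ring
  exact Nat.eq_of_mul_eq_mul_right (Nat.factorial_pos n) h3

lemma tendsto_choose_ratio (e : ℕ) :
    Tendsto (fun n : ℕ => ((n+e).choose e : ℝ) * (Nat.factorial e : ℝ) / (n:ℝ)^e) atTop (nhds 1) := by
  have key : ∀ n : ℕ, ((n+e).choose e : ℝ) * (Nat.factorial e : ℝ) / (n:ℝ)^e
      = ∏ i ∈ range e, (((n:ℝ)+1+(i:ℝ)) / (n:ℝ)) := by
    intro n
    rw [Finset.prod_div_distrib, Finset.prod_const, card_range]
    congr 1
    · rw [← Nat.cast_mul, choose_fact e n]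
      push_cast
      rfl
  have hlim : Tendsto (fun n : ℕ => ∏ i ∈ range e, (((n:ℝ)+1+(i:ℝ)) / (n:ℝ))) atTop
      (nhds (∏ _i ∈ range e, (1:ℝ))) := by
    apply tendsto_finset_prod
    intro i _
    have h1 : Tendsto (fun n : ℕ => 1 + (1+(i:ℝ))/(n:ℝ)) atTop (nhds (1 + 0)) :=
      tendsto_const_nhds.add (tendsto_const_div_atTop_nhds_zero_nat (1+(i:ℝ)))
    rw [add_zero] at h1
    apply h1.congr'
    filter_upwards [eventually_ge_atTop 1] with n hn
    have hn0 : ((n:ℝ)) ≠ 0 := by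
      have : (1:ℝ) ≤ (n:ℝ) := by exact_mod_cast hn
      linarith
    field_simp
    ring
  rw [Finset.prod_const_one] at hlim
  exact hlim.congr fun n => (key n).symm

theorem boundary_asymptotics' (d : ℕ) (hd : 2 ≤ d) :
    Tendsto
      (fun n : ℕ => coeff n (boundaryGF d) /
        ((((d : ℝ) - 1) / d) ^ (2 ^ d - 1) *
          ((n : ℝ) ^ (2 ^ d - 1) / (Nat.factorial (2 ^ d - 1))) * (d : ℝ) ^ n))
      atTop (nhds 1) := by
  have hd1 : 1 ≤ d := by omega
  have hdR : (2:ℝ) ≤ (d:ℝ) := by exact_mod_cast hd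
  have hd0 : (0:ℝ) < (d:ℝ) := by linarith
  set e : ℕ := 2^d - 1 with he
  set ν : ℝ := ((d:ℝ)-1)/(d:ℝ) with hν
  have hν0 : 0 < ν := by
    rw [hν]
    apply div_pos (by linarith) hd0
  have hP := GF_P hd
  rw [← he, ← hν] at hP
  unfold Pp Negl at hP
  rw [show 2^d - 1 = e from he.symm] at hP
  set R : PowerSeries ℝ := boundaryGF d - C (ν^e) * Ms d (2^d) with hR
  have h2de : 2^d = e + 1 := by
    have : 1 ≤ 2^d := Nat.one_le_two_pow
    omega
  have hcoeffM : ∀ n : ℕ, coeff n (Ms d (2^d)) = ((n+e).choose e : ℝ) * (d:ℝ)^n := by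
    intro n
    rw [h2de, Ms, coeff_inv_pow]
  have hT1 := tendsto_choose_ratio e
  -- second piece
  have hf2 : Tendsto (fun n : ℕ => (((n:ℝ)+1)/(n:ℝ))^e) atTop (nhds 1) := by
    have h1 : Tendsto (fun n : ℕ => 1 + (1:ℝ)/(n:ℝ)) atTop (nhds (1 + 0)) :=
      tendsto_const_nhds.add (tendsto_const_div_atTop_nhds_zero_nat 1)
    rw [add_zero] at h1
    have h2 : Tendsto (fun n : ℕ => ((n:ℝ)+1)/(n:ℝ)) atTop (nhds 1) := by
      apply h1.congr'
      filter_upwards [eventually_ge_atTop 1] with n hn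
      have hn0 : ((n:ℝ)) ≠ 0 := by
        have : (1:ℝ) ≤ (n:ℝ) := by exact_mod_cast hn
        linarith
      field_simp
    have := h2.pow e
    simpa using this
  have hT2 : Tendsto (fun n : ℕ =>
      (nseq d R n / ((n:ℝ)+1)^e) * ((((n:ℝ)+1)/(n:ℝ))^e * ((Nat.factorial e : ℝ)/(ν^e))))
      atTop (nhds 0) := by
    have hlim2 : Tendsto (fun n : ℕ => (((n:ℝ)+1)/(n:ℝ))^e * ((Nat.factorial e : ℝ)/(ν^e)))
        atTop (nhds (1 * ((Nat.factorial e : ℝ)/(ν^e)))) := hf2.mul_const _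
    have := hP.mul hlim2
    rw [zero_mul] at this
    exact this
  have hsum := hT1.add hT2
  rw [add_zero] at hsum
  apply hsum.congr'
  filter_upwards [eventually_ge_atTop 1] with n hn
  have hn0 : (0:ℝ) < (n:ℝ) := by
    have : (1:ℝ) ≤ (n:ℝ) := by exact_mod_cast hn
    linarith
  have hne : ((n:ℝ))^e ≠ 0 := by positivity
  have hdn : ((d:ℝ))^n ≠ 0 := by positivity
  have hfe : ((Nat.factorial e : ℕ):ℝ) ≠ 0 := by
    exact_mod_cast Nat.factorial_ne_zero e
  have hνe : ν^e ≠ 0 := by positivity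
  have hn1 : ((n:ℝ)+1)^e ≠ 0 := by positivity
  have hcoeff : coeff n (boundaryGF d)
      = ν^e * (((n+e).choose e : ℝ) * (d:ℝ)^n) + coeff n R := by
    rw [hR, map_sub, coeff_C_mul, hcoeffM]
    ring
  have hnseq : nseq d R n = coeff n R / (d:ℝ)^n := rfl
  rw [hcoeff, hnseq]
  have hn0' : (n:ℝ) ≠ 0 := hn0.ne'
  field_simp
  have h2 : (n:ℝ)^e * coeff n R * (((n:ℝ)+1)/n)^e = coeff n R * ((n:ℝ)+1)^e := by
    rw [div_pow]; field_simp
  rw [h2]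
  ring
end Infra
end BGaux

end

/-- Asymptotics of the number of boundary guillotine partitions of a d-box:
`[xⁿ] f_d ∼ ((d−1)/d)^(2^d−1) · n^(2^d−1)/(2^d−1)! · dⁿ`. -/
theorem boundary_asymptotics (d : ℕ) (hd : 2 ≤ d) :
    Filter.Tendsto
      (fun n : ℕ => coeff n (boundaryGF d) /
        ((((d : ℝ) - 1) / d) ^ (2 ^ d - 1) *
          ((n : ℝ) ^ (2 ^ d - 1) / (Nat.factorial (2 ^ d - 1))) * (d : ℝ) ^ n))
      Filter.atTop (nhds 1) := by
  exact BGaux.boundary_asymptotics' d hd
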